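/- With notation as in the formal annulus setting (degree n morphism f(x) = u^n α, f(y) = v^n α^{−1} with α ∈ C^* over a complete DVR R of equal characteristic p, with p | n), write dy/y = 𝔡·v^m·β·(dv/v) with 𝔡 ∈ R, β ∈ C^*, m ∈ ℕ. Then m is prime to p. -/

import Mathlib

noncomputable section

set_option linter.unusedVariables false

/-- The formal annulus `R[[u,v]]/(uv - c)` of thickness `c` over `R`. -/
abbrev FormalAnnulus (R : Type*) [CommRing R] (c : R) :=
  MvPowerSeries (Fin 2) R ⧸
    Ideal.span {(MvPowerSeries.X 0 * MvPowerSeries.X 1 : MvPowerSeries (Fin 2) R) -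
      MvPowerSeries.C (σ := Fin 2) (R := R) c}

namespace Stmt6Aux

open MvPowerSeries

variable {R : Type*} [CommRing R]

/-- The weight `j - i` of a monomial `u^i v^j`. -/
def w (e : Fin 2 →₀ ℕ) : ℤ := (e 1 : ℤ) - (e 0 : ℤ)

lemma w_add (a b : Fin 2 →₀ ℕ) : w (a + b) = w a + w b := by
  simp only [w, Finsupp.add_apply]
  push_cast
  ring

/-- The derivation `v ∂/∂v - u ∂/∂u` on `R[[u,v]]`, coefficientwise. -/
def del (f : MvPowerSeries (Fin 2) R) : MvPowerSeries (Fin 2) R :=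
  fun e => w e • f e

lemma coeff_del (f : MvPowerSeries (Fin 2) R) (e : Fin 2 →₀ ℕ) :
    coeff e (del f) = w e • coeff e f := rfl

lemma del_add (f g : MvPowerSeries (Fin 2) R) : del (f + g) = del f + del g := by
  apply MvPowerSeries.ext; intro e
  rw [map_add, coeff_del, map_add, coeff_del, coeff_del, smul_add]

lemma del_sub (f g : MvPowerSeries (Fin 2) R) : del (f - g) = del f - del g := by
  apply MvPowerSeries.ext; intro e
  rw [map_sub, coeff_del, map_sub, coeff_del, coeff_del, smul_sub]

lemma del_mul (f g : MvPowerSeries (Fin 2) R) :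
    del (f * g) = del f * g + f * del g := by
  classical
  apply MvPowerSeries.ext; intro e
  rw [coeff_del, map_add, coeff_mul, coeff_mul, coeff_mul, Finset.smul_sum,
    ← Finset.sum_add_distrib]
  refine Finset.sum_congr rfl fun p hp => ?_
  replace hp := Finset.HasAntidiagonal.mem_antidiagonal.mp hp
  rw [coeff_del, coeff_del, ← hp, w_add, add_smul, smul_mul_assoc, mul_smul_comm]

lemma del_monomial (e : Fin 2 →₀ ℕ) (r : R) :
    del (monomial e r) = w e • monomial e r := by
  classical
  apply MvPowerSeries.ext; intro d
  rw [coeff_del, map_zsmul, coeff_monomial]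
  split
  · next h => subst h; rfl
  · simp

lemma del_one : del (1 : MvPowerSeries (Fin 2) R) = 0 := by
  have : (1 : MvPowerSeries (Fin 2) R) = monomial 0 1 := by
    simp
  rw [this, del_monomial]
  simp [w]

lemma del_C (r : R) : del (C (σ := Fin 2) (R := R) r) = 0 := by
  have : C (σ := Fin 2) (R := R) r = monomial 0 r := rfl
  rw [this, del_monomial]
  simp [w]

lemma del_X1 : del (X 1 : MvPowerSeries (Fin 2) R) = X 1 := by
  rw [X_def, del_monomial]
  have : w (Finsupp.single (1 : Fin 2) 1) = 1 := by
    simp [w, Finsupp.single_apply]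
  rw [this, one_smul, ← X_def]

lemma del_relator (c : R) :
    del (X 0 * X 1 - C (σ := Fin 2) (R := R) c) = 0 := by
  rw [del_sub, del_C, sub_zero, X_def, X_def, monomial_mul_monomial, del_monomial]
  have : w (Finsupp.single (0 : Fin 2) 1 + Finsupp.single (1 : Fin 2) 1) = 0 := by
    simp [w, Finsupp.add_apply, Finsupp.single_apply]
  rw [this, zero_smul]


set_option maxHeartbeats 1000000
set_option synthInstance.maxHeartbeats 400000

lemma del_zero : del (0 : MvPowerSeries (Fin 2) R) = 0 := by
  have := del_sub (0 : MvPowerSeries (Fin 2) R) 0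
  simpa using this

/-- The relator ideal. -/
abbrev relI (R : Type*) [CommRing R] (c : R) : Ideal (MvPowerSeries (Fin 2) R) :=
  Ideal.span {(MvPowerSeries.X 0 * MvPowerSeries.X 1 : MvPowerSeries (Fin 2) R) -
      MvPowerSeries.C (σ := Fin 2) (R := R) c}

/-- The ring hom recording a value together with its `del`-derivative. -/
def Phi (c : R) : MvPowerSeries (Fin 2) R →+*
    TrivSqZeroExt (MvPowerSeries (Fin 2) R ⧸ relI R c) (MvPowerSeries (Fin 2) R ⧸ relI R c) where
  toFun f := (Ideal.Quotient.mk (relI R c) f, Ideal.Quotient.mk (relI R c) (del f))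
  map_one' := by
    refine TrivSqZeroExt.ext ?_ ?_
    · rw [TrivSqZeroExt.fst_mk, TrivSqZeroExt.fst_one, map_one]
    · rw [TrivSqZeroExt.snd_mk, TrivSqZeroExt.snd_one, del_one, map_zero]
  map_mul' f g := by
    refine TrivSqZeroExt.ext ?_ ?_
    · exact map_mul _ f g
    · 
      show Ideal.Quotient.mk (relI R c) (del (f * g)) =
        Ideal.Quotient.mk (relI R c) f • Ideal.Quotient.mk (relI R c) (del g) +
          MulOpposite.op (Ideal.Quotient.mk (relI R c) g) • Ideal.Quotient.mk (relI R c) (del f)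
      rw [op_smul_eq_smul, smul_eq_mul, smul_eq_mul, del_mul, map_add, map_mul, map_mul]
      ring
  map_zero' := by
    refine TrivSqZeroExt.ext ?_ ?_
    · rw [TrivSqZeroExt.fst_mk, TrivSqZeroExt.fst_zero, map_zero]
    · rw [TrivSqZeroExt.snd_mk, TrivSqZeroExt.snd_zero, del_zero, map_zero]
  map_add' f g := by
    refine TrivSqZeroExt.ext ?_ ?_
    · exact map_add _ f g
    · show Ideal.Quotient.mk (relI R c) (del (f + g)) =
        Ideal.Quotient.mk (relI R c) (del f) + Ideal.Quotient.mk (relI R c) (del g)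
      rw [del_add, map_add]

lemma Phi_apply_fst (c : R) (f : MvPowerSeries (Fin 2) R) :
    (Phi c f).fst = Ideal.Quotient.mk (relI R c) f := rfl

lemma Phi_apply_snd (c : R) (f : MvPowerSeries (Fin 2) R) :
    (Phi c f).snd = Ideal.Quotient.mk (relI R c) (del f) := rfl

lemma Phi_relator (c : R) :
    Phi c ((MvPowerSeries.X 0 * MvPowerSeries.X 1 : MvPowerSeries (Fin 2) R) -
      MvPowerSeries.C (σ := Fin 2) (R := R) c) = 0 := by
  refine TrivSqZeroExt.ext ?_ ?_
  · rw [Phi_apply_fst, TrivSqZeroExt.fst_zero]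
    exact Ideal.Quotient.eq_zero_iff_mem.mpr (Ideal.subset_span (Set.mem_singleton _))
  · rw [Phi_apply_snd, TrivSqZeroExt.snd_zero, del_relator, map_zero]

/-- The lifted ring hom on the quotient. -/
def PhiBar (c : R) : (MvPowerSeries (Fin 2) R ⧸ relI R c) →+*
    TrivSqZeroExt (MvPowerSeries (Fin 2) R ⧸ relI R c) (MvPowerSeries (Fin 2) R ⧸ relI R c) :=
  Ideal.Quotient.lift (relI R c) (Phi c) (by
    intro a ha
    rw [relI, Ideal.mem_span_singleton'] at ha
    obtain ⟨g, rfl⟩ := ha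
    rw [map_mul, Phi_relator, mul_zero])

lemma PhiBar_mk (c : R) (f : MvPowerSeries (Fin 2) R) :
    PhiBar c (Ideal.Quotient.mk (relI R c) f) = Phi c f :=
  Ideal.Quotient.lift_mk _ _ _

lemma fst_PhiBar (c : R) (x : MvPowerSeries (Fin 2) R ⧸ relI R c) :
    (PhiBar c x).fst = x := by
  obtain ⟨f, rfl⟩ := Ideal.Quotient.mk_surjective x
  rw [PhiBar_mk, Phi_apply_fst]

lemma snd_PhiBar_mul (c : R) (a b : MvPowerSeries (Fin 2) R ⧸ relI R c) :
    (PhiBar c (a * b)).snd = a * (PhiBar c b).snd + b * (PhiBar c a).snd := by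
  rw [map_mul, TrivSqZeroExt.snd_mul, fst_PhiBar, fst_PhiBar, op_smul_eq_smul,
    smul_eq_mul, smul_eq_mul]

lemma snd_PhiBar_algebraMap (c : R) (r : R) :
    (PhiBar c (algebraMap R (MvPowerSeries (Fin 2) R ⧸ relI R c) r)).snd = 0 := by
  have h : algebraMap R (MvPowerSeries (Fin 2) R ⧸ relI R c) r =
      Ideal.Quotient.mk (relI R c) (MvPowerSeries.C (σ := Fin 2) (R := R) r) := by
    rw [MvPowerSeries.c_eq_algebraMap]
    rfl
  rw [h, PhiBar_mk, Phi_apply_snd, del_C, map_zero]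

/-- The derivation `v ∂/∂v - u ∂/∂u` on the formal annulus. -/
def delta (c : R) : Derivation R (MvPowerSeries (Fin 2) R ⧸ relI R c)
    (MvPowerSeries (Fin 2) R ⧸ relI R c) where
  toFun x := (PhiBar c x).snd
  map_add' a b := by
    show (PhiBar c (a + b)).snd = (PhiBar c a).snd + (PhiBar c b).snd
    rw [map_add, TrivSqZeroExt.snd_add]
  map_smul' r x := by
    show (PhiBar c (r • x)).snd = r • (PhiBar c x).snd
    rw [Algebra.smul_def (r : R) x, snd_PhiBar_mul, snd_PhiBar_algebraMap, mul_zero, add_zero]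
    exact (Algebra.smul_def r _).symm
  map_one_eq_zero' := by
    show (PhiBar c 1).snd = 0
    rw [map_one, TrivSqZeroExt.snd_one]
  leibniz' a b := by
    show (PhiBar c (a * b)).snd = a • (PhiBar c b).snd + b • (PhiBar c a).snd
    rw [snd_PhiBar_mul, smul_eq_mul, smul_eq_mul]

lemma delta_mk (c : R) (f : MvPowerSeries (Fin 2) R) :
    delta c (Ideal.Quotient.mk (relI R c) f) = Ideal.Quotient.mk (relI R c) (del f) := by
  show (PhiBar c _).snd = _
  rw [PhiBar_mk, Phi_apply_snd]


/-! ### Coefficient functionals -/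

def idx (i j : ℕ) : Fin 2 →₀ ℕ := Finsupp.single 0 i + Finsupp.single 1 j

lemma idx_apply0 (i j : ℕ) : idx i j 0 = i := by
  simp [idx, Finsupp.single_apply]

lemma idx_apply1 (i j : ℕ) : idx i j 1 = j := by
  simp [idx, Finsupp.single_apply]

lemma idx_zero : idx 0 0 = 0 := by
  simp [idx]

lemma le_idx (a b i j : ℕ) (h0 : a ≤ i) (h1 : b ≤ j) : idx a b ≤ idx i j := by
  rw [Finsupp.le_def, Fin.forall_fin_two]
  constructor
  · rw [idx_apply0, idx_apply0]; exact h0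
  · rw [idx_apply1, idx_apply1]; exact h1

lemma idx_sub_idx (a b i j : ℕ) : idx i j - idx a b = idx (i - a) (j - b) := by
  refine Finsupp.ext ?_
  rw [Fin.forall_fin_two]
  constructor
  · rw [Finsupp.tsub_apply, idx_apply0, idx_apply0, idx_apply0]
  · rw [Finsupp.tsub_apply, idx_apply1, idx_apply1, idx_apply1]

lemma idx_one_one : idx 1 1 = Finsupp.single (0 : Fin 2) 1 + Finsupp.single 1 1 := rfl

lemma idx_zero_one : idx 0 1 = Finsupp.single (1 : Fin 2) 1 := by
  simp [idx]

/-- Partial sums of the `v`-adic expansion: `∑_{i<N} c^i · (coefficient of u^i v^{i+d})`. -/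
def S (c : R) (d N : ℕ) (f : MvPowerSeries (Fin 2) R) : R :=
  ∑ i ∈ Finset.range N, c ^ i * coeff (idx i (i + d)) f

lemma S_sub (c : R) (d N : ℕ) (f g : MvPowerSeries (Fin 2) R) :
    S c d N (f - g) = S c d N f - S c d N g := by
  simp [S, map_sub, mul_sub, Finset.sum_sub_distrib]

lemma coeff_X1_mul (f : MvPowerSeries (Fin 2) R) (i j : ℕ) (hj : 1 ≤ j) :
    coeff (idx i j) (X 1 * f) = coeff (idx i (j - 1)) f := by
  rw [X_def, ← idx_zero_one, coeff_monomial_mul, if_pos (le_idx 0 1 i j (Nat.zero_le _) hj),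
    one_mul, idx_sub_idx, Nat.sub_zero]

lemma S_X1_mul (c : R) (d N : ℕ) (f : MvPowerSeries (Fin 2) R) :
    S c (d + 1) N (X 1 * f) = S c d N f := by
  refine Finset.sum_congr rfl fun i _ => ?_
  rw [coeff_X1_mul f i (i + (d + 1)) (by omega)]
  have h : i + (d + 1) - 1 = i + d := by omega
  rw [h]

lemma S_X1pow_mul (c : R) (d N : ℕ) (f : MvPowerSeries (Fin 2) R) :
    ∀ k : ℕ, S c (d + k) N (X 1 ^ k * f) = S c d N f := by
  intro k
  induction k with
  | zero => simp
  | succ k ih =>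
    have h1 : X 1 ^ (k + 1) * f = X 1 * (X 1 ^ k * f) := by ring
    have h2 : d + (k + 1) = (d + k) + 1 := by omega
    rw [h2, h1, S_X1_mul, ih]

lemma S_C_mul (c r : R) (d N : ℕ) (f : MvPowerSeries (Fin 2) R) :
    S c d N (C (σ := Fin 2) (R := R) r * f) = r * S c d N f := by
  rw [S, S, Finset.mul_sum]
  refine Finset.sum_congr rfl fun i _ => ?_
  rw [coeff_C_mul]
  ring

lemma S_del (c : R) (d N : ℕ) (f : MvPowerSeries (Fin 2) R) :
    S c d N (del f) = (d : R) * S c d N f := by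
  rw [S, S, Finset.mul_sum]
  refine Finset.sum_congr rfl fun i _ => ?_
  rw [coeff_del]
  have hw : w (idx i (i + d)) = (d : ℤ) := by
    rw [w, idx_apply0, idx_apply1]
    push_cast
    ring
  rw [hw, zsmul_eq_mul]
  push_cast
  ring

lemma coeff_mul_rel (c : R) (g : MvPowerSeries (Fin 2) R) (i j : ℕ) (hi : 1 ≤ i) (hj : 1 ≤ j) :
    coeff (idx i j) (g * (X 0 * X 1 - C (σ := Fin 2) (R := R) c)) =
      coeff (idx (i - 1) (j - 1)) g - c * coeff (idx i j) g := by
  rw [mul_sub, map_sub, X_def (0 : Fin 2), X_def (1 : Fin 2), monomial_mul_monomial, mul_one,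
    ← idx_one_one, coeff_mul_monomial, if_pos (le_idx 1 1 i j hi hj), mul_one, idx_sub_idx,
    coeff_mul_C]
  ring

lemma coeff_mul_rel0 (c : R) (g : MvPowerSeries (Fin 2) R) (j : ℕ) :
    coeff (idx 0 j) (g * (X 0 * X 1 - C (σ := Fin 2) (R := R) c)) = -(c * coeff (idx 0 j) g) := by
  rw [mul_sub, map_sub, X_def (0 : Fin 2), X_def (1 : Fin 2), monomial_mul_monomial, mul_one,
    ← idx_one_one, coeff_mul_monomial, if_neg, coeff_mul_C]
  · ring
  · intro h
    have := Finsupp.le_def.mp h 0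
    rw [idx_apply0, idx_apply0] at this
    omega

lemma S_rel_succ (c : R) (d : ℕ) (g : MvPowerSeries (Fin 2) R) :
    ∀ N : ℕ, S c d (N + 1) (g * (X 0 * X 1 - C (σ := Fin 2) (R := R) c)) =
      -(c ^ (N + 1) * coeff (idx N (N + d)) g) := by
  intro N
  induction N with
  | zero =>
    rw [S, Finset.sum_range_one, pow_zero, one_mul, coeff_mul_rel0, pow_one]
  | succ N ih =>
    rw [S, Finset.sum_range_succ, ← S, ih,
      coeff_mul_rel c g (N + 1) (N + 1 + d) (by omega) (by omega)]
    have h1 : N + 1 - 1 = N := by omega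
    have h2 : N + 1 + d - 1 = N + d := by omega
    rw [h1, h2]
    ring

lemma S_rel (c : R) (d : ℕ) (g : MvPowerSeries (Fin 2) R) (N : ℕ) :
    ∃ r : R, S c d N (g * (X 0 * X 1 - C (σ := Fin 2) (R := R) c)) = c ^ N * r := by
  cases N with
  | zero => exact ⟨0, by simp [S]⟩
  | succ N => exact ⟨-coeff (idx N (N + d)) g, by rw [S_rel_succ]; ring⟩

lemma S_zero_succ (c : R) (f : MvPowerSeries (Fin 2) R) (N : ℕ) :
    ∃ s : R, S c 0 (N + 1) f = constantCoeff (σ := Fin 2) (R := R) f + c * s := by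
  refine ⟨∑ i ∈ Finset.range N, c ^ i * coeff (idx (i + 1) (i + 1)) f, ?_⟩
  rw [S, Finset.sum_range_succ', Finset.mul_sum]
  have h0 : c ^ 0 * coeff (idx 0 (0 + 0)) f = constantCoeff (σ := Fin 2) (R := R) f := by
    rw [pow_zero, one_mul]
    have : idx 0 (0 + 0) = 0 := idx_zero
    rw [this, coeff_zero_eq_constantCoeff_apply]
  rw [h0, add_comm]
  congr 1
  refine Finset.sum_congr rfl fun i _ => ?_
  have : i + 1 + 0 = i + 1 := by omega
  rw [this]
  ring

lemma isUnit_constantCoeff {c : R} [IsLocalRing R] (hcu : ¬ IsUnit c)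
    (x : (MvPowerSeries (Fin 2) R ⧸ relI R c)ˣ) (G : MvPowerSeries (Fin 2) R)
    (hG : Ideal.Quotient.mk (relI R c) G = (x : MvPowerSeries (Fin 2) R ⧸ relI R c)) :
    IsUnit (constantCoeff (σ := Fin 2) (R := R) G) := by
  obtain ⟨G', hG'⟩ := Ideal.Quotient.mk_surjective
    ((x⁻¹ : (MvPowerSeries (Fin 2) R ⧸ relI R c)ˣ) : MvPowerSeries (Fin 2) R ⧸ relI R c)
  have h1 : Ideal.Quotient.mk (relI R c) (G * G') = Ideal.Quotient.mk (relI R c) 1 := by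
    rw [map_mul, hG, hG', map_one, Units.mul_inv]
  have h2 := Ideal.Quotient.eq.mp h1
  rw [Ideal.mem_span_singleton'] at h2
  obtain ⟨g, hg⟩ := h2
  have h3 := congrArg (constantCoeff (σ := Fin 2) (R := R)) hg
  rw [map_mul, map_sub, map_sub, map_mul, map_one, constantCoeff_X, constantCoeff_X,
    constantCoeff_C, map_mul] at h3
  by_contra hne
  have hcm : c ∈ IsLocalRing.maximalIdeal R :=
    (IsLocalRing.mem_maximalIdeal c).mpr (mem_nonunits_iff.mpr hcu)
  have hmem : constantCoeff (σ := Fin 2) (R := R) G ∈ IsLocalRing.maximalIdeal R :=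
    (IsLocalRing.mem_maximalIdeal _).mpr (mem_nonunits_iff.mpr hne)
  have hone : (1 : R) ∈ IsLocalRing.maximalIdeal R := by
    have : (1 : R) = constantCoeff (σ := Fin 2) (R := R) G * constantCoeff (σ := Fin 2) (R := R) G' -
        constantCoeff (σ := Fin 2) (R := R) g * (0 * 0 - c) := by
      linear_combination h3
    rw [this]
    refine sub_mem (Ideal.mul_mem_right _ _ hmem) ?_
    have : constantCoeff (σ := Fin 2) (R := R) g * (0 * 0 - c) =
        -(constantCoeff (σ := Fin 2) (R := R) g * c) := by ring
    rw [this]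
    exact neg_mem (Ideal.mul_mem_left _ _ hcm)
  exact (mem_nonunits_iff.mp ((IsLocalRing.mem_maximalIdeal _).mp hone)) isUnit_one

end Stmt6Aux


open Stmt6Aux MvPowerSeries

/-- Equal-characteristic half of the alternative (A).  In the formal annulus
setting over a complete DVR `R` of equal characteristic `p`, with `y = v^n·α` (`α ∈ C^*`,
`p ∣ n`), if `dy/y = dα/α = 𝔡·v^m·β·(dv/v)` (equivalently `v·dα = 𝔡·v^m·β·α·dv`) with
`𝔡 ∈ R` nonzero and `β ∈ C^*`, then `m` is prime to `p`. -/
theorem stmt6 (p n m : ℕ) [Fact (Nat.Prime p)] (hpn : p ∣ n) (hn : 0 < n)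
    (R : Type*) [CommRing R] [IsDomain R] [IsDiscreteValuationRing R]
    [IsAdicComplete (IsLocalRing.maximalIdeal R) R] [CharP R p]
    (c : R) (hc : c ≠ 0) (hcu : ¬ IsUnit c)
    (α β : (FormalAnnulus R c)ˣ) (𝔡 : R) (h𝔡 : 𝔡 ≠ 0)
    (v : FormalAnnulus R c)
    (hv : v = Ideal.Quotient.mk _ (MvPowerSeries.X 1))
    (y : FormalAnnulus R c) (hy : y = v ^ n * α)
    (hδ : v • KaehlerDifferential.D R (FormalAnnulus R c) (↑α : FormalAnnulus R c) =
      (algebraMap R (FormalAnnulus R c) 𝔡 * v ^ m * ↑β * ↑α) •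
        KaehlerDifferential.D R (FormalAnnulus R c) v) :
    ¬ p ∣ m := by
  intro hpm
  have hm0 : (m : R) = 0 := (CharP.cast_eq_zero_iff R p m).mpr hpm
  subst hv
  -- lifts of the units
  obtain ⟨A, hA⟩ := Ideal.Quotient.mk_surjective ((α : FormalAnnulus R c))
  obtain ⟨B, hB⟩ := Ideal.Quotient.mk_surjective ((β : FormalAnnulus R c))
  -- apply the universal property of Kähler differentials with the derivation `delta c`
  have hδ' := congrArg (Derivation.liftKaehlerDifferential (delta c)) hδ
  rw [map_smul, map_smul, Derivation.liftKaehlerDifferential_comp_D,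
    Derivation.liftKaehlerDifferential_comp_D, smul_eq_mul, smul_eq_mul] at hδ'
  have hdv : delta c (Ideal.Quotient.mk (relI R c) (X 1)) =
      Ideal.Quotient.mk (relI R c) (X 1) := by
    rw [delta_mk, del_X1]
  have hdA : delta c ((α : FormalAnnulus R c)) = Ideal.Quotient.mk (relI R c) (del A) := by
    rw [← hA, delta_mk]
  have hC : MvPowerSeries.C (σ := Fin 2) (R := R) 𝔡 = algebraMap R (MvPowerSeries (Fin 2) R) 𝔡 := by
    rw [MvPowerSeries.c_eq_algebraMap]
  have halg : algebraMap R (FormalAnnulus R c) 𝔡 =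
      Ideal.Quotient.mk (relI R c) (C (σ := Fin 2) (R := R) 𝔡) := by
    rw [hC]
    rfl
  have key : Ideal.Quotient.mk (relI R c) (X 1 * del A) =
      Ideal.Quotient.mk (relI R c) (C (σ := Fin 2) (R := R) 𝔡 * X 1 ^ m * B * A * X 1) := by
    rw [hdv] at hδ'
    simp only [map_mul, map_pow]
    rw [hA, hB, ← hdA, ← halg]
    exact hδ'
  have hmem := Ideal.Quotient.eq.mp key
  rw [Ideal.mem_span_singleton'] at hmem
  obtain ⟨g, hg⟩ := hmem
  -- the key coefficient identity, for every truncation level N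
  have main : ∀ N : ℕ, ∃ r : R, 𝔡 * S c 0 N (B * A) = c ^ N * r := by
    intro N
    obtain ⟨r, hr⟩ := S_rel c (m + 1) g N
    refine ⟨-r, ?_⟩
    have e1 : S c (m + 1) N (X 1 * del A) = 0 := by
      rw [S_X1_mul, S_del, hm0, zero_mul]
    have e2 : S c (m + 1) N (C (σ := Fin 2) (R := R) 𝔡 * X 1 ^ m * B * A * X 1) =
        𝔡 * S c 0 N (B * A) := by
      have hrearr : C (σ := Fin 2) (R := R) 𝔡 * X 1 ^ m * B * A * X 1 =
          C (σ := Fin 2) (R := R) 𝔡 * (X 1 ^ (m + 1) * (B * A)) := by ring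
      rw [hrearr, S_C_mul]
      have := S_X1pow_mul c 0 N (B * A) (m + 1)
      rw [Nat.zero_add] at this
      rw [this]
    have e3 := congrArg (S c (m + 1) N) hg
    rw [hr, S_sub, e1, e2, zero_sub] at e3
    linear_combination e3
  -- the constant coefficient of B*A is a unit
  have hu : IsUnit (constantCoeff (σ := Fin 2) (R := R) (B * A)) := by
    refine isUnit_constantCoeff hcu (β * α) (B * A) ?_
    rw [map_mul, hA, hB, Units.val_mul]
  have hcm : c ∈ IsLocalRing.maximalIdeal R :=
    (IsLocalRing.mem_maximalIdeal c).mpr (mem_nonunits_iff.mpr hcu)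
  have hd_mem : ∀ N : ℕ, 𝔡 ∈ (IsLocalRing.maximalIdeal R) ^ (N + 1) := by
    intro N
    obtain ⟨r, hr⟩ := main (N + 1)
    obtain ⟨s, hs⟩ := S_zero_succ c (B * A) N
    have hSu : IsUnit (S c 0 (N + 1) (B * A)) := by
      by_contra hns
      have h1 : S c 0 (N + 1) (B * A) ∈ IsLocalRing.maximalIdeal R :=
        (IsLocalRing.mem_maximalIdeal _).mpr (mem_nonunits_iff.mpr hns)
      have h2 : constantCoeff (σ := Fin 2) (R := R) (B * A) ∈ IsLocalRing.maximalIdeal R := by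
        have hcc : constantCoeff (σ := Fin 2) (R := R) (B * A) = S c 0 (N + 1) (B * A) - c * s := by
          rw [hs]; ring
        rw [hcc]
        exact sub_mem h1 (Ideal.mul_mem_right s _ hcm)
      exact (mem_nonunits_iff.mp ((IsLocalRing.mem_maximalIdeal _).mp h2)) hu
    obtain ⟨uS, huS⟩ := hSu
    have h𝔡eq : 𝔡 = c ^ (N + 1) * (r * (↑uS⁻¹ : R)) := by
      have h4 : 𝔡 * (uS : R) = c ^ (N + 1) * r := by rw [huS]; exact hr
      calc 𝔡 = 𝔡 * (uS : R) * (↑uS⁻¹ : R) := by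
              rw [mul_assoc, Units.mul_inv, mul_one]
        _ = c ^ (N + 1) * r * (↑uS⁻¹ : R) := by rw [h4]
        _ = c ^ (N + 1) * (r * (↑uS⁻¹ : R)) := by ring
    rw [h𝔡eq]
    exact Ideal.mul_mem_right _ _ (Ideal.pow_mem_pow hcm (N + 1))
  have hfinal : 𝔡 = 0 := by
    refine IsHausdorff.haus (inferInstance : IsHausdorff (IsLocalRing.maximalIdeal R) R) 𝔡 ?_
    intro nn
    rw [SModEq.zero]
    have htop : ((IsLocalRing.maximalIdeal R) ^ nn • ⊤ : Submodule R R) =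
        ((IsLocalRing.maximalIdeal R) ^ nn : Ideal R) := by
      rw [Ideal.smul_eq_mul, Ideal.mul_top]
    rw [htop]
    cases nn with
    | zero => simp
    | succ k => exact hd_mem k
  exact h𝔡 hfinal
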